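/- arXiv:1311.3049 — 2 statements merged into one kernel-verified Lean document; each statement's English description precedes it below -/
import Mathlib

section
/- Let M be an n×n Hermitian matrix, y a column vector in ℂ^n, a a real number, and let N be the (n+1)×(n+1) Hermitian matrix given in block form by N = [[M, y],[y*, a]], where y* is the conjugate transpose of y. Then i_+(N) − 1 ≤ i_+(M) ≤ i_+(N) and i_-(N) − 1 ≤ i_-(M) ≤ i_-(N). -/
open Matrix

/-- The positive inertia index of a matrix: the number of positive eigenvalues
(counted with multiplicity) if the matrix is Hermitian, and `0` otherwise. -/
noncomputable def posInertia {k 𝕜 : Type*} [RCLike 𝕜] [Fintype k] [DecidableEq k]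
    (A : Matrix k k 𝕜) : ℕ :=
  if h : A.IsHermitian then Fintype.card {i // 0 < h.eigenvalues i} else 0

/-- The negative inertia index of a matrix. -/
noncomputable def negInertia {k 𝕜 : Type*} [RCLike 𝕜] [Fintype k] [DecidableEq k]
    (A : Matrix k k 𝕜) : ℕ :=
  if h : A.IsHermitian then Fintype.card {i // h.eigenvalues i < 0} else 0

/-- The nullity of a matrix: the number of zero eigenvalues. -/
noncomputable def nulInertia {k 𝕜 : Type*} [RCLike 𝕜] [Fintype k] [DecidableEq k]
    (A : Matrix k k 𝕜) : ℕ :=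
  if h : A.IsHermitian then Fintype.card {i // h.eigenvalues i = 0} else 0

/-- A weighted graph: a simple graph together with a symmetric weight function
which is positive on all edges. -/
structure WeightedGraph (V : Type*) where
  G : SimpleGraph V
  w : V → V → ℝ
  symm : ∀ u v : V, w u v = w v u
  pos : ∀ u v : V, G.Adj u v → 0 < w u v

open Classical in
/-- The (weighted) adjacency matrix of a weighted graph. -/
noncomputable def WeightedGraph.adjMatrix {V : Type*} [Fintype V] [DecidableEq V]
    (W : WeightedGraph V) : Matrix V V ℝ :=
  fun a b => if W.G.Adj a b then W.w a b else 0

/-- `i₊`, the number of positive eigenvalues of the adjacency matrix. -/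
noncomputable def WeightedGraph.iPos {V : Type*} [Fintype V] [DecidableEq V]
    (W : WeightedGraph V) : ℕ := posInertia W.adjMatrix

/-- `i₋`, the number of negative eigenvalues of the adjacency matrix. -/
noncomputable def WeightedGraph.iNeg {V : Type*} [Fintype V] [DecidableEq V]
    (W : WeightedGraph V) : ℕ := negInertia W.adjMatrix

/-- `i₀`, the number of zero eigenvalues of the adjacency matrix. -/
noncomputable def WeightedGraph.iNul {V : Type*} [Fintype V] [DecidableEq V]
    (W : WeightedGraph V) : ℕ := nulInertia W.adjMatrix

/-- A weighted graph is bicyclic if its underlying graph is connected and has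
exactly one more edge than vertices. -/
def WeightedGraph.IsBicyclic {V : Type*} [Fintype V] (W : WeightedGraph V) : Prop :=
  W.G.Connected ∧ W.G.edgeSet.ncard = Fintype.card V + 1

/-- The graph has a pendant vertex (a vertex of degree one). -/
def WeightedGraph.HasPendant {V : Type*} (W : WeightedGraph V) : Prop :=
  ∃ x : V, (W.G.neighborSet x).ncard = 1

/-- The graph has no pendant vertices. -/
def WeightedGraph.NoPendant {V : Type*} (W : WeightedGraph V) : Prop :=
  ∀ x : V, (W.G.neighborSet x).ncard ≠ 1

/-- The base of `G` is (isomorphic to) `H`: some induced subgraph of `G` is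
isomorphic to `H`.  (For a bicyclic graph `G` and a bicyclic graph `H` without
pendant vertices this induced subgraph is necessarily the unique base of `G`.) -/
def BaseIsoTo {V B : Type*} (G : SimpleGraph V) (H : SimpleGraph B) : Prop :=
  ∃ S : Set V, Nonempty ((G.induce S) ≃g H)

/-- Vertex labels of the connecting path of `∞(p,l,q)`: the path starts at the
vertex `0` of the first cycle `0, 1, …, p-1`, and its further vertices are
`p, p+1, …`. -/
def pathVert (p j : ℕ) : ℕ := if j = 0 then 0 else p - 1 + j

/-- Vertex labels of the second cycle of `∞(p,l,q)`: it starts at the last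
vertex of the connecting path and continues with `p+l-1, p+l, …`. -/
def infCyc2Vert (p l k : ℕ) : ℕ := if k = 0 then pathVert p (l - 1) else p + l - 2 + k

/-- The edge relation of `∞(p,l,q)` on the vertex labels `0, …, p+q+l-3`:
the first cycle on `0, …, p-1`, the connecting path (on `l` vertices) from the
vertex `0`, and the second cycle attached at the last path vertex. -/
def infinityRel (p l q a b : ℕ) : Prop :=
  (a + 1 < p ∧ b = a + 1) ∨ (a = 0 ∧ b = p - 1) ∨
  (∃ j, j + 1 < l ∧ a = pathVert p j ∧ b = pathVert p (j + 1)) ∨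
  (∃ k, k + 1 < q ∧ a = infCyc2Vert p l k ∧ b = infCyc2Vert p l (k + 1)) ∨
  (a = infCyc2Vert p l 0 ∧ b = infCyc2Vert p l (q - 1))

/-- The graph `∞(p,l,q)`: two vertex-disjoint cycles of lengths `p` and `q`
joined by a path on `l` vertices (whose endpoints are identified with one
vertex on each cycle).  It has `p + q + l - 2` vertices. -/
def infinityGraph (p l q : ℕ) : SimpleGraph (Fin (p + q + l - 2)) :=
  SimpleGraph.fromRel (fun a b => infinityRel p l q a.1 b.1)

/-- The edge relation of one of the three `u,v`-paths of `θ(p,l,q)` having `m`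
internal vertices, the internal vertices being labelled `o, o+1, …, o+m-1`
(`u` is the vertex `0` and `v` is the vertex `1`). -/
def thetaPathRel (m o a b : ℕ) : Prop :=
  if m = 0 then a = 0 ∧ b = 1
  else (a = 0 ∧ b = o) ∨ (∃ i, i + 1 < m ∧ a = o + i ∧ b = o + i + 1) ∨ (a = o + m - 1 ∧ b = 1)

/-- The graph `θ(p,l,q)`: two vertices `u = 0` and `v = 1` joined by three
internally disjoint paths with `p`, `l`, `q` internal vertices respectively.
It has `p + l + q + 2` vertices. -/
def thetaGraph (p l q : ℕ) : SimpleGraph (Fin (p + l + q + 2)) :=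
  SimpleGraph.fromRel (fun a b =>
    thetaPathRel p 2 a.1 b.1 ∨ thetaPathRel l (p + 2) a.1 b.1 ∨
      thetaPathRel q (p + l + 2) a.1 b.1)

/-- The edge set of `G` is exactly the (symmetrized) list `E`. -/
def adjSpec {V : Type*} (G : SimpleGraph V) (E : List (V × V)) : Prop :=
  ∀ a b : V, G.Adj a b ↔ ((a, b) ∈ E ∨ (b, a) ∈ E)

/-- The weighted subgraph induced on a set `S` of vertices. -/
def WeightedGraph.induce {V : Type*} (W : WeightedGraph V) (S : Set V) : WeightedGraph S where
  G := W.G.induce S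
  w := fun a b => W.w a b
  symm := fun a b => W.symm a b
  pos := fun a b h => W.pos a b h

/-- The `k`-th vertex (mod `n`) of a cycle on `Fin n`. -/
def cycVert (n : ℕ) (hn : 0 < n) (k : ℕ) : Fin n := ⟨k % n, Nat.mod_lt _ hn⟩

/-- `W` is the weighted graph `θ(1,1,1)` (i.e. `K_{2,3}`) with parts `{u, v}`
and `{x1, x2, x3}`. -/
def Theta111Shape {V : Type*} (W : WeightedGraph V) (u v x1 x2 x3 : V) : Prop :=
  [u, v, x1, x2, x3].Nodup ∧ (∀ z : V, z ∈ [u, v, x1, x2, x3]) ∧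
    adjSpec W.G [(u, x1), (u, x2), (u, x3), (x1, v), (x2, v), (x3, v)]

/-- `W` is the weighted graph `θ(1,0,1)` on vertices `u, v, x1, x2` with edges
`uv, ux1, x1v, ux2, x2v`. -/
def Theta101Shape {V : Type*} (W : WeightedGraph V) (u v x1 x2 : V) : Prop :=
  [u, v, x1, x2].Nodup ∧ (∀ z : V, z ∈ [u, v, x1, x2]) ∧
    adjSpec W.G [(u, v), (u, x1), (x1, v), (u, x2), (x2, v)]

/-- `W` is the weighted graph `θ(1,0,2)` on vertices `u, v, x, y, z` with edges
`uv, ux, xv, uy, yz, zv`. -/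
def Theta102Shape {V : Type*} (W : WeightedGraph V) (u v x y z : V) : Prop :=
  [u, v, x, y, z].Nodup ∧ (∀ t : V, t ∈ [u, v, x, y, z]) ∧
    adjSpec W.G [(u, v), (u, x), (x, v), (u, y), (y, z), (z, v)]

/-- `W` is the weighted graph `θ(2,0,2)` on vertices `u, v, x1, x2, y1, y2`
with edges `uv, ux1, x1x2, x2v, uy1, y1y2, y2v`. -/
def Theta202Shape {V : Type*} (W : WeightedGraph V) (u v x1 x2 y1 y2 : V) : Prop :=
  [u, v, x1, x2, y1, y2].Nodup ∧ (∀ t : V, t ∈ [u, v, x1, x2, y1, y2]) ∧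
    adjSpec W.G [(u, v), (u, x1), (x1, x2), (x2, v), (u, y1), (y1, y2), (y2, v)]

/-- `W` is the weighted graph `θ(1,1,2)` on vertices `u, v, x1, x2, y1, y2`
with edges `ux1, x1v, ux2, x2v, uy1, y1y2, y2v`. -/
def Theta112Shape {V : Type*} (W : WeightedGraph V) (u v x1 x2 y1 y2 : V) : Prop :=
  [u, v, x1, x2, y1, y2].Nodup ∧ (∀ t : V, t ∈ [u, v, x1, x2, y1, y2]) ∧
    adjSpec W.G [(u, x1), (x1, v), (u, x2), (x2, v), (u, y1), (y1, y2), (y2, v)]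

/-- `W` is the weighted graph `∞(3,1,3)`: two triangles sharing the vertex `c`. -/
def Inf313Shape {V : Type*} (W : WeightedGraph V) (c a1 a2 b1 b2 : V) : Prop :=
  [c, a1, a2, b1, b2].Nodup ∧ (∀ t : V, t ∈ [c, a1, a2, b1, b2]) ∧
    adjSpec W.G [(c, a1), (a1, a2), (a2, c), (c, b1), (b1, b2), (b2, c)]

/-- `W` is the weighted graph `∞(3,2,3)`: the triangle `u,x,y` and the triangle
`v,s,t`, joined by the edge `uv`. -/
def Inf323Shape {V : Type*} (W : WeightedGraph V) (u v x y s t : V) : Prop :=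
  [u, v, x, y, s, t].Nodup ∧ (∀ z : V, z ∈ [u, v, x, y, s, t]) ∧
    adjSpec W.G [(u, x), (x, y), (y, u), (v, s), (s, t), (t, v), (u, v)]

/-- `W` is the weighted graph `∞(3,1,4)`: the triangle `c,x,y` and the
quadrilateral `c,z1,z2,z3` sharing the vertex `c`. -/
def Inf314Shape {V : Type*} (W : WeightedGraph V) (c x y z1 z2 z3 : V) : Prop :=
  [c, x, y, z1, z2, z3].Nodup ∧ (∀ t : V, t ∈ [c, x, y, z1, z2, z3]) ∧
    adjSpec W.G [(c, x), (x, y), (y, c), (c, z1), (z1, z2), (z2, z3), (z3, c)]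

/-- `W` is the weighted graph `∞(4,1,4)`: the quadrilaterals `c,x1,x2,x3` and
`c,y1,y2,y3` sharing the vertex `c`. -/
def Inf414Shape {V : Type*} (W : WeightedGraph V) (c x1 x2 x3 y1 y2 y3 : V) : Prop :=
  [c, x1, x2, x3, y1, y2, y3].Nodup ∧ (∀ t : V, t ∈ [c, x1, x2, x3, y1, y2, y3]) ∧
    adjSpec W.G [(c, x1), (x1, x2), (x2, x3), (x3, c), (c, y1), (y1, y2), (y2, y3), (y3, c)]



open Module

noncomputable section StmtAux

variable {m : ℕ}

/-- The real quadratic form of a complex matrix. -/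
def quadForm (A : Matrix (Fin m) (Fin m) ℂ) (x : Fin m → ℂ) : ℝ :=
  (star x ⬝ᵥ A *ᵥ x).re

variable {A : Matrix (Fin m) (Fin m) ℂ}

lemma quadForm_eq (hA : A.IsHermitian) (x : Fin m → ℂ) :
    quadForm A x = ∑ i, hA.eigenvalues i *
      ‖(star (hA.eigenvectorUnitary : Matrix (Fin m) (Fin m) ℂ) *ᵥ x) i‖ ^ 2 := by
  set U : Matrix (Fin m) (Fin m) ℂ := (hA.eigenvectorUnitary : Matrix (Fin m) (Fin m) ℂ)
  set z : Fin m → ℂ := star U *ᵥ x with hz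
  have h1 : A *ᵥ x = U *ᵥ ((diagonal (RCLike.ofReal ∘ hA.eigenvalues)) *ᵥ z) := by
    conv_lhs => rw [hA.spectral_theorem]
    simp [Matrix.mulVec_mulVec, hz, Matrix.mul_assoc]
    rfl
  have h2 : star x ⬝ᵥ A *ᵥ x
      = star z ⬝ᵥ ((diagonal (RCLike.ofReal ∘ hA.eigenvalues)) *ᵥ z) := by
    rw [h1, Matrix.dotProduct_mulVec (star x) U]
    congr 1
    have : star z = star x ᵥ* U := by
      rw [hz, Matrix.star_mulVec, Matrix.star_eq_conjTranspose, conjTranspose_conjTranspose]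
    rw [this]
  rw [quadForm, h2]
  rw [dotProduct]
  rw [Complex.re_sum]
  congr 1
  ext i
  simp only [Matrix.mulVec_diagonal, Pi.star_apply, Function.comp_apply]
  have : (star (z i)) * (RCLike.ofReal (hA.eigenvalues i) * z i)
      = (hA.eigenvalues i : ℂ) * ((starRingEnd ℂ) (z i) * z i) := by
    simp only [RCLike.star_def]
    exact mul_left_comm _ _ _
  rw [this, ← Complex.normSq_eq_conj_mul_self,
    show (Complex.normSq (z i) : ℂ) = ((‖z i‖ ^ 2 : ℝ) : ℂ) by
      rw [Complex.normSq_eq_norm_sq],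
    ← Complex.ofReal_mul, Complex.ofReal_re]

end StmtAux

noncomputable section StmtAux2
open Matrix Module
variable {m : ℕ} {A : Matrix (Fin m) (Fin m) ℂ}

/-- Change of coordinates by the eigenvector unitary. -/
def coordEquiv (hA : A.IsHermitian) : (Fin m → ℂ) ≃ₗ[ℂ] (Fin m → ℂ) := by
  refine LinearEquiv.ofLinear
    (Matrix.mulVecLin (star (hA.eigenvectorUnitary : Matrix (Fin m) (Fin m) ℂ)))
    (Matrix.mulVecLin (hA.eigenvectorUnitary : Matrix (Fin m) (Fin m) ℂ)) ?_ ?_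
  · rw [← Matrix.mulVecLin_mul]
    rw [show star (hA.eigenvectorUnitary : Matrix (Fin m) (Fin m) ℂ) *
        (hA.eigenvectorUnitary : Matrix (Fin m) (Fin m) ℂ) = 1 from
      Unitary.star_mul_self_of_mem (SetLike.coe_mem _)]
    exact Matrix.mulVecLin_one
  · rw [← Matrix.mulVecLin_mul]
    rw [show (hA.eigenvectorUnitary : Matrix (Fin m) (Fin m) ℂ) *
        star (hA.eigenvectorUnitary : Matrix (Fin m) (Fin m) ℂ) = 1 from
      Unitary.mul_star_self_of_mem (SetLike.coe_mem _)]
    exact Matrix.mulVecLin_one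

lemma coordEquiv_apply (hA : A.IsHermitian) (x : Fin m → ℂ) :
    coordEquiv hA x = star (hA.eigenvectorUnitary : Matrix (Fin m) (Fin m) ℂ) *ᵥ x := rfl

lemma quadForm_eq' (hA : A.IsHermitian) (x : Fin m → ℂ) :
    quadForm A x = ∑ i, hA.eigenvalues i * ‖coordEquiv hA x i‖ ^ 2 :=
  quadForm_eq hA x

/-- The coordinate subspace supported on `s`. -/
def coordSpace (s : Set (Fin m)) : Submodule ℂ (Fin m → ℂ) :=
  Submodule.span ℂ ((Pi.basisFun ℂ (Fin m)) '' s)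

lemma mem_coordSpace {s : Set (Fin m)} {x : Fin m → ℂ} :
    x ∈ coordSpace s ↔ ∀ i ∉ s, x i = 0 := by
  rw [coordSpace, Basis.mem_span_image, Finsupp.support_subset_iff]
  simp [Pi.basisFun_repr]

lemma coordSpace_finrank (s : Set (Fin m)) [Fintype s] :
    finrank ℂ (coordSpace s) = Fintype.card s := by
  have hli : LinearIndependent ℂ (fun i : s => Pi.basisFun ℂ (Fin m) i.1) :=
    (Pi.basisFun ℂ (Fin m)).linearIndependent.comp Subtype.val Subtype.val_injective
  have : Set.range (fun i : s => Pi.basisFun ℂ (Fin m) i.1)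
      = (Pi.basisFun ℂ (Fin m)) '' s := by
    rw [show (fun i : s => Pi.basisFun ℂ (Fin m) i.1)
      = (Pi.basisFun ℂ (Fin m)) ∘ Subtype.val from rfl, Set.range_comp, Subtype.range_coe]
  rw [coordSpace, ← this, finrank_span_eq_card hli]

end StmtAux2

noncomputable section StmtAux3
open Matrix Module
variable {m : ℕ} {A : Matrix (Fin m) (Fin m) ℂ}

lemma posInertia_eq (hA : A.IsHermitian) :
    posInertia A = Fintype.card {i // 0 < hA.eigenvalues i} := by
  rw [posInertia, dif_pos hA]

lemma negInertia_eq (hA : A.IsHermitian) :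
    negInertia A = Fintype.card {i // hA.eigenvalues i < 0} := by
  rw [negInertia, dif_pos hA]

lemma finrank_le_posInertia (hA : A.IsHermitian) (S : Submodule ℂ (Fin m → ℂ))
    (hS : ∀ x ∈ S, x ≠ 0 → 0 < quadForm A x) :
    finrank ℂ S ≤ posInertia A := by
  classical
  set s : Set (Fin m) := {i | 0 < hA.eigenvalues i} with hs
  set T : Submodule ℂ (Fin m → ℂ) := (coordSpace sᶜ).comap (coordEquiv hA).toLinearMap with hT
  have hdisj : Disjoint S T := by
    rw [Submodule.disjoint_def]
    intro x hxS hxT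
    by_contra hx0
    have h1 : 0 < quadForm A x := hS x hxS hx0
    have h2 : quadForm A x ≤ 0 := by
      rw [quadForm_eq' hA]
      apply Finset.sum_nonpos
      intro i _
      rcases le_or_gt (hA.eigenvalues i) 0 with h | h
      · exact mul_nonpos_of_nonpos_of_nonneg h (by positivity)
      · have : coordEquiv hA x i = 0 := by
          have := (mem_coordSpace).1 (Submodule.mem_comap.1 hxT) i (by simp [hs, h])
          exact this
        simp [this]
    linarith
  have hTrank : finrank ℂ T = m - posInertia A := by
    have h1 : finrank ℂ T = finrank ℂ (coordSpace sᶜ) := by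
      rw [hT, Submodule.comap_equiv_eq_map_symm]
      exact LinearEquiv.finrank_map_eq _ _
    rw [h1, coordSpace_finrank, posInertia_eq hA, Fintype.card_compl_set, Fintype.card_fin]
    have : Fintype.card s = Fintype.card {i // 0 < hA.eigenvalues i} :=
      Fintype.card_congr (Equiv.refl _)
    omega
  have hsum : finrank ℂ S + finrank ℂ T ≤ m := by
    have := Submodule.finrank_add_finrank_le_of_disjoint hdisj
    simpa using this
  have hple : posInertia A ≤ m := by
    rw [posInertia_eq hA]
    simpa using Fintype.card_subtype_le (fun i : Fin m => 0 < hA.eigenvalues i)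
  omega

lemma finrank_le_negInertia (hA : A.IsHermitian) (S : Submodule ℂ (Fin m → ℂ))
    (hS : ∀ x ∈ S, x ≠ 0 → quadForm A x < 0) :
    finrank ℂ S ≤ negInertia A := by
  classical
  set s : Set (Fin m) := {i | hA.eigenvalues i < 0} with hs
  set T : Submodule ℂ (Fin m → ℂ) := (coordSpace sᶜ).comap (coordEquiv hA).toLinearMap with hT
  have hdisj : Disjoint S T := by
    rw [Submodule.disjoint_def]
    intro x hxS hxT
    by_contra hx0
    have h1 : quadForm A x < 0 := hS x hxS hx0
    have h2 : 0 ≤ quadForm A x := by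
      rw [quadForm_eq' hA]
      apply Finset.sum_nonneg
      intro i _
      rcases le_or_gt 0 (hA.eigenvalues i) with h | h
      · positivity
      · have : coordEquiv hA x i = 0 :=
          (mem_coordSpace).1 (Submodule.mem_comap.1 hxT) i (by simp [hs, h])
        simp [this]
    linarith
  have hTrank : finrank ℂ T = m - negInertia A := by
    have h1 : finrank ℂ T = finrank ℂ (coordSpace sᶜ) := by
      rw [hT, Submodule.comap_equiv_eq_map_symm]
      exact LinearEquiv.finrank_map_eq _ _
    rw [h1, coordSpace_finrank, negInertia_eq hA, Fintype.card_compl_set, Fintype.card_fin]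
    have : Fintype.card s = Fintype.card {i // hA.eigenvalues i < 0} :=
      Fintype.card_congr (Equiv.refl _)
    omega
  have hsum : finrank ℂ S + finrank ℂ T ≤ m := by
    have := Submodule.finrank_add_finrank_le_of_disjoint hdisj
    simpa using this
  have hple : negInertia A ≤ m := by
    rw [negInertia_eq hA]
    simpa using Fintype.card_subtype_le (fun i : Fin m => hA.eigenvalues i < 0)
  omega

lemma exists_pos_subspace (hA : A.IsHermitian) :
    ∃ S : Submodule ℂ (Fin m → ℂ), finrank ℂ S = posInertia A ∧
      ∀ x ∈ S, x ≠ 0 → 0 < quadForm A x := by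
  classical
  set s : Set (Fin m) := {i | 0 < hA.eigenvalues i} with hs
  refine ⟨(coordSpace s).comap (coordEquiv hA).toLinearMap, ?_, ?_⟩
  · rw [Submodule.comap_equiv_eq_map_symm]
    rw [LinearEquiv.finrank_map_eq _ _, coordSpace_finrank, posInertia_eq hA]
    exact Fintype.card_congr (Equiv.refl _)
  · intro x hx hx0
    rw [quadForm_eq' hA]
    have hz : coordEquiv hA x ≠ 0 := by
      intro h
      exact hx0 (by simpa using congrArg (coordEquiv hA).symm h)
    obtain ⟨j, hj⟩ := Function.ne_iff.1 hz
    apply Finset.sum_pos'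
    · intro i _
      rcases eq_or_ne (coordEquiv hA x i) 0 with h | h
      · simp [h]
      · have hi : 0 < hA.eigenvalues i := by
          by_contra hcon
          exact h ((mem_coordSpace).1 (Submodule.mem_comap.1 hx) i (by simpa [hs] using hcon))
        positivity
    · refine ⟨j, Finset.mem_univ j, ?_⟩
      have hjpos : 0 < hA.eigenvalues j := by
        by_contra hcon
        exact hj ((mem_coordSpace).1 (Submodule.mem_comap.1 hx) j (by simpa [hs] using hcon))
      have h2 : (0:ℝ) < ‖coordEquiv hA x j‖ ^ 2 :=
        pow_pos (norm_pos_iff.2 hj) 2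
      positivity

lemma exists_neg_subspace (hA : A.IsHermitian) :
    ∃ S : Submodule ℂ (Fin m → ℂ), finrank ℂ S = negInertia A ∧
      ∀ x ∈ S, x ≠ 0 → quadForm A x < 0 := by
  classical
  set s : Set (Fin m) := {i | hA.eigenvalues i < 0} with hs
  refine ⟨(coordSpace s).comap (coordEquiv hA).toLinearMap, ?_, ?_⟩
  · rw [Submodule.comap_equiv_eq_map_symm]
    rw [LinearEquiv.finrank_map_eq _ _, coordSpace_finrank, negInertia_eq hA]
    exact Fintype.card_congr (Equiv.refl _)
  · intro x hx hx0
    rw [quadForm_eq' hA]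
    have hz : coordEquiv hA x ≠ 0 := by
      intro h
      exact hx0 (by simpa using congrArg (coordEquiv hA).symm h)
    obtain ⟨j, hj⟩ := Function.ne_iff.1 hz
    have : (0:ℝ) < ∑ i, (- hA.eigenvalues i) * ‖coordEquiv hA x i‖ ^ 2 := by
      apply Finset.sum_pos'
      · intro i _
        rcases eq_or_ne (coordEquiv hA x i) 0 with h | h
        · simp [h]
        · have hi : hA.eigenvalues i < 0 := by
            by_contra hcon
            exact h ((mem_coordSpace).1 (Submodule.mem_comap.1 hx) i (by simpa [hs] using hcon))
          have : (0:ℝ) < -hA.eigenvalues i := by linarith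
          positivity
      · refine ⟨j, Finset.mem_univ j, ?_⟩
        have hjpos : hA.eigenvalues j < 0 := by
          by_contra hcon
          exact hj ((mem_coordSpace).1 (Submodule.mem_comap.1 hx) j (by simpa [hs] using hcon))
        have h1 : (0:ℝ) < -hA.eigenvalues j := by linarith
        have h2 : (0:ℝ) < ‖coordEquiv hA x j‖ ^ 2 :=
          pow_pos (norm_pos_iff.2 hj) 2
        positivity
    have := this
    rw [show ∑ i, (- hA.eigenvalues i) * ‖coordEquiv hA x i‖ ^ 2
        = - ∑ i, hA.eigenvalues i * ‖coordEquiv hA x i‖ ^ 2 by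
      rw [← Finset.sum_neg_distrib]; congr 1; ext i; ring] at this
    linarith

end StmtAux3



noncomputable section StmtAux4
open Module

/-- Extension of a vector by a zero in the last coordinate. -/
def extZero (n : ℕ) : (Fin n → ℂ) →ₗ[ℂ] (Fin (n + 1) → ℂ) where
  toFun x := Fin.snoc x 0
  map_add' x y := by
    funext i
    refine Fin.lastCases ?_ (fun j => ?_) i <;>
      simp [Fin.snoc_last, Fin.snoc_castSucc]
  map_smul' c x := by
    funext i
    refine Fin.lastCases ?_ (fun j => ?_) i <;>
      simp [Fin.snoc_last, Fin.snoc_castSucc]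

/-- Restriction of a vector to the first `n` coordinates. -/
def restr (n : ℕ) : (Fin (n + 1) → ℂ) →ₗ[ℂ] (Fin n → ℂ) :=
  LinearMap.funLeft ℂ ℂ Fin.castSucc

lemma restr_extZero (n : ℕ) (x : Fin n → ℂ) : restr n (extZero n x) = x := by
  funext j
  simp [restr, extZero, LinearMap.funLeft, Fin.snoc_castSucc]

lemma extZero_last (n : ℕ) (x : Fin n → ℂ) : extZero n x (Fin.last n) = 0 := by
  show (Fin.snoc x 0 : Fin (n + 1) → ℂ) (Fin.last n) = 0
  exact Fin.snoc_last _ _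

lemma extZero_restr (n : ℕ) (x : Fin (n + 1) → ℂ) (hx : x (Fin.last n) = 0) :
    extZero n (restr n x) = x := by
  funext i
  refine Fin.lastCases ?_ (fun j => ?_) i
  · rw [extZero_last, hx]
  · show (Fin.snoc (restr n x) 0 : Fin (n+1) → ℂ) _ = _
    rw [Fin.snoc_castSucc]
    rfl

lemma extZero_injective (n : ℕ) : Function.Injective (extZero n) :=
  Function.LeftInverse.injective (restr_extZero n)

end StmtAux4

/-- bordering a Hermitian matrix by one row and column changes
the positive and negative inertia indices by at most one. -/
theorem stmt14 {n : ℕ} (M : Matrix (Fin n) (Fin n) ℂ) (hM : M.IsHermitian)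
    (y : Fin n → ℂ) (a : ℝ) (N : Matrix (Fin (n + 1)) (Fin (n + 1)) ℂ)
    (hblock : ∀ i j : Fin n, N i.castSucc j.castSucc = M i j)
    (hcol : ∀ i : Fin n, N i.castSucc (Fin.last n) = y i)
    (hrow : ∀ j : Fin n, N (Fin.last n) j.castSucc = star (y j))
    (hcorner : N (Fin.last n) (Fin.last n) = (a : ℂ)) :
    posInertia N - 1 ≤ posInertia M ∧ posInertia M ≤ posInertia N ∧
    negInertia N - 1 ≤ negInertia M ∧ negInertia M ≤ negInertia N := by
  classical
  -- N is Hermitian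
  have hN : N.IsHermitian := by
    rw [Matrix.IsHermitian]
    ext i j
    rw [Matrix.conjTranspose_apply]
    refine Fin.lastCases ?_ (fun i' => ?_) i
    · refine Fin.lastCases ?_ (fun j' => ?_) j
      · rw [hcorner]
        exact Complex.conj_ofReal a
      · rw [hcol j', hrow j']
    · refine Fin.lastCases ?_ (fun j' => ?_) j
      · rw [hrow i', hcol i', star_star]
      · rw [hblock, hblock]
        exact hM.apply i' j'
  -- the quadratic forms agree on vectors with vanishing last coordinate
  have hquad : ∀ x : Fin (n + 1) → ℂ, x (Fin.last n) = 0 →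
      quadForm N x = quadForm M (restr n x) := by
    intro x hx
    have hinner : ∀ i : Fin n, (N *ᵥ x) (Fin.castSucc i) = (M *ᵥ restr n x) i := by
      intro i
      show (∑ j, N (Fin.castSucc i) j * x j) = ∑ j, M i j * (restr n x) j
      rw [Fin.sum_univ_castSucc]
      simp only [hblock, hx, mul_zero, add_zero]
      rfl
    have key : star x ⬝ᵥ (N *ᵥ x) = star (restr n x) ⬝ᵥ (M *ᵥ restr n x) := by
      show (∑ i, star (x i) * (N *ᵥ x) i) = ∑ i, star ((restr n x) i) * (M *ᵥ restr n x) i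
      rw [Fin.sum_univ_castSucc]
      simp only [hx, star_zero, zero_mul, add_zero, hinner]
      rfl
    rw [quadForm, quadForm, key]
  -- dimension comparison for the embedding direction
  have emb : ∀ (P : ℕ)
      (hle : ∀ S : Submodule ℂ (Fin (n+1) → ℂ),
        (∀ x ∈ S, x ≠ 0 → 0 < quadForm N x) → finrank ℂ S ≤ P)
      (S : Submodule ℂ (Fin n → ℂ))
      (hSpos : ∀ x ∈ S, x ≠ 0 → 0 < quadForm M x), finrank ℂ S ≤ P := by
    intro P hle S hSpos
    have h1 : finrank ℂ S = finrank ℂ (S.map (extZero n)) :=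
      (Submodule.equivMapOfInjective _ (extZero_injective n) S).finrank_eq
    rw [h1]
    apply hle
    rintro x ⟨v, hv, rfl⟩ hx0
    have hv0 : v ≠ 0 := by
      rintro rfl
      exact hx0 (map_zero _)
    rw [hquad _ (extZero_last n v), restr_extZero]
    exact hSpos v hv hv0
  -- dimension comparison for the restriction direction
  have res : ∀ (P : ℕ)
      (hle : ∀ S : Submodule ℂ (Fin n → ℂ),
        (∀ x ∈ S, x ≠ 0 → 0 < quadForm M x) → finrank ℂ S ≤ P)
      (S : Submodule ℂ (Fin (n+1) → ℂ))
      (hSpos : ∀ x ∈ S, x ≠ 0 → 0 < quadForm N x), finrank ℂ S ≤ P + 1 := by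
    intro P hle S hSpos
    set K : Submodule ℂ (Fin (n+1) → ℂ) :=
      LinearMap.ker (LinearMap.proj (R := ℂ) (φ := fun _ : Fin (n+1) => ℂ) (Fin.last n)) with hK
    have hKmem : ∀ x : Fin (n+1) → ℂ, x ∈ K ↔ x (Fin.last n) = 0 := by
      intro x; rw [hK, LinearMap.mem_ker]; rfl
    have hKrank : n ≤ finrank ℂ K := by
      have h1 := LinearMap.finrank_range_add_finrank_ker
        (LinearMap.proj (R := ℂ) (φ := fun _ : Fin (n+1) => ℂ) (Fin.last n))
      rw [Module.finrank_fintype_fun_eq_card, Fintype.card_fin] at h1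
      have h2 : finrank ℂ (LinearMap.range
          (LinearMap.proj (R := ℂ) (φ := fun _ : Fin (n+1) => ℂ) (Fin.last n))) ≤ 1 := by
        simpa [Module.finrank_self] using Submodule.finrank_le (LinearMap.range
          (LinearMap.proj (R := ℂ) (φ := fun _ : Fin (n+1) => ℂ) (Fin.last n)))
      rw [hK]
      omega
    have hS0 : finrank ℂ S ≤ finrank ℂ (S ⊓ K : Submodule ℂ (Fin (n+1) → ℂ)) + 1 := by
      have h1 := Submodule.finrank_sup_add_finrank_inf_eq S K
      have h2 : finrank ℂ (S ⊔ K : Submodule ℂ (Fin (n+1) → ℂ)) ≤ n + 1 := by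
        simpa [Module.finrank_fintype_fun_eq_card] using
          Submodule.finrank_le (S ⊔ K : Submodule ℂ (Fin (n+1) → ℂ))
      omega
    set S' : Submodule ℂ (Fin n → ℂ) := (S ⊓ K).map (restr n) with hS'
    have himg : S'.map (extZero n) = S ⊓ K := by
      apply le_antisymm
      · rintro z ⟨v, hv, rfl⟩
        obtain ⟨x, hx, rfl⟩ := hv
        rwa [extZero_restr n x ((hKmem x).1 hx.2)]
      · intro x hx
        refine ⟨restr n x, Submodule.mem_map_of_mem hx, extZero_restr n x ((hKmem x).1 hx.2)⟩
    have h2 : finrank ℂ (S ⊓ K : Submodule ℂ (Fin (n+1) → ℂ)) = finrank ℂ S' := by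
      rw [← himg]
      exact (Submodule.equivMapOfInjective _ (extZero_injective n) S').finrank_eq.symm
    have h3 : finrank ℂ S' ≤ P := by
      apply hle
      rintro x' ⟨x, hx, rfl⟩ hx0
      have hxlast : x (Fin.last n) = 0 := (hKmem x).1 hx.2
      have hxne : x ≠ 0 := by
        rintro rfl
        exact hx0 (map_zero _)
      rw [← hquad x hxlast]
      exact hSpos x hx.1 hxne
    omega
  -- same two facts for the negative part
  have embN : ∀ (P : ℕ)
      (hle : ∀ S : Submodule ℂ (Fin (n+1) → ℂ),
        (∀ x ∈ S, x ≠ 0 → quadForm N x < 0) → finrank ℂ S ≤ P)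
      (S : Submodule ℂ (Fin n → ℂ))
      (hSpos : ∀ x ∈ S, x ≠ 0 → quadForm M x < 0), finrank ℂ S ≤ P := by
    intro P hle S hSpos
    have h1 : finrank ℂ S = finrank ℂ (S.map (extZero n)) :=
      (Submodule.equivMapOfInjective _ (extZero_injective n) S).finrank_eq
    rw [h1]
    apply hle
    rintro x ⟨v, hv, rfl⟩ hx0
    have hv0 : v ≠ 0 := by
      rintro rfl
      exact hx0 (map_zero _)
    rw [hquad _ (extZero_last n v), restr_extZero]
    exact hSpos v hv hv0
  have resN : ∀ (P : ℕ)
      (hle : ∀ S : Submodule ℂ (Fin n → ℂ),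
        (∀ x ∈ S, x ≠ 0 → quadForm M x < 0) → finrank ℂ S ≤ P)
      (S : Submodule ℂ (Fin (n+1) → ℂ))
      (hSpos : ∀ x ∈ S, x ≠ 0 → quadForm N x < 0), finrank ℂ S ≤ P + 1 := by
    intro P hle S hSpos
    set K : Submodule ℂ (Fin (n+1) → ℂ) :=
      LinearMap.ker (LinearMap.proj (R := ℂ) (φ := fun _ : Fin (n+1) => ℂ) (Fin.last n)) with hK
    have hKmem : ∀ x : Fin (n+1) → ℂ, x ∈ K ↔ x (Fin.last n) = 0 := by
      intro x; rw [hK, LinearMap.mem_ker]; rfl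
    have hS0 : finrank ℂ S ≤ finrank ℂ (S ⊓ K : Submodule ℂ (Fin (n+1) → ℂ)) + 1 := by
      have h1 := Submodule.finrank_sup_add_finrank_inf_eq S K
      have h2 : finrank ℂ (S ⊔ K : Submodule ℂ (Fin (n+1) → ℂ)) ≤ n + 1 := by
        simpa [Module.finrank_fintype_fun_eq_card] using
          Submodule.finrank_le (S ⊔ K : Submodule ℂ (Fin (n+1) → ℂ))
      have hKrank : n ≤ finrank ℂ K := by
        have h1' := LinearMap.finrank_range_add_finrank_ker
          (LinearMap.proj (R := ℂ) (φ := fun _ : Fin (n+1) => ℂ) (Fin.last n))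
        rw [Module.finrank_fintype_fun_eq_card, Fintype.card_fin] at h1'
        have h2' : finrank ℂ (LinearMap.range
            (LinearMap.proj (R := ℂ) (φ := fun _ : Fin (n+1) => ℂ) (Fin.last n))) ≤ 1 := by
          simpa [Module.finrank_self] using Submodule.finrank_le (LinearMap.range
            (LinearMap.proj (R := ℂ) (φ := fun _ : Fin (n+1) => ℂ) (Fin.last n)))
        rw [hK]
        omega
      omega
    set S' : Submodule ℂ (Fin n → ℂ) := (S ⊓ K).map (restr n) with hS'
    have himg : S'.map (extZero n) = S ⊓ K := by
      apply le_antisymm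
      · rintro z ⟨v, hv, rfl⟩
        obtain ⟨x, hx, rfl⟩ := hv
        rwa [extZero_restr n x ((hKmem x).1 hx.2)]
      · intro x hx
        refine ⟨restr n x, Submodule.mem_map_of_mem hx, extZero_restr n x ((hKmem x).1 hx.2)⟩
    have h2 : finrank ℂ (S ⊓ K : Submodule ℂ (Fin (n+1) → ℂ)) = finrank ℂ S' := by
      rw [← himg]
      exact (Submodule.equivMapOfInjective _ (extZero_injective n) S').finrank_eq.symm
    have h3 : finrank ℂ S' ≤ P := by
      apply hle
      rintro x' ⟨x, hx, rfl⟩ hx0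
      have hxlast : x (Fin.last n) = 0 := (hKmem x).1 hx.2
      have hxne : x ≠ 0 := by
        rintro rfl
        exact hx0 (map_zero _)
      rw [← hquad x hxlast]
      exact hSpos x hx.1 hxne
    omega
  obtain ⟨SM, hSMrank, hSMpos⟩ := exists_pos_subspace hM
  obtain ⟨SN, hSNrank, hSNpos⟩ := exists_pos_subspace hN
  obtain ⟨TM, hTMrank, hTMneg⟩ := exists_neg_subspace hM
  obtain ⟨TN, hTNrank, hTNneg⟩ := exists_neg_subspace hN
  have e1 : posInertia M ≤ posInertia N := by
    rw [← hSMrank]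
    exact emb _ (fun S h => finrank_le_posInertia hN S h) SM hSMpos
  have e2 : posInertia N ≤ posInertia M + 1 := by
    rw [← hSNrank]
    exact res _ (fun S h => finrank_le_posInertia hM S h) SN hSNpos
  have e3 : negInertia M ≤ negInertia N := by
    rw [← hTMrank]
    exact embN _ (fun S h => finrank_le_negInertia hN S h) TM hTMneg
  have e4 : negInertia N ≤ negInertia M + 1 := by
    rw [← hTNrank]
    exact resN _ (fun S h => finrank_le_negInertia hM S h) TN hTNneg
  exact ⟨by omega, e1, by omega, e3⟩
end

section
/- Let P^n_w be a weighted path on n ≥ 1 vertices v_1, v_2, …, v_n (edges v_iv_{i+1} for 1 ≤ i ≤ n−1) with positive edge weights. Then i_+(P^n_w) = i_-(P^n_w) = (n−1)/2 if n is odd, and i_+(P^n_w) = i_-(P^n_w) = n/2 if n is even. -/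
open Matrix

section InertiaAux
open Polynomial

/-- det(x•1 - A) is the product of (x - eigenvalue). -/
lemma det_smul_one_sub_eq_prod {n : ℕ} {A : Matrix (Fin n) (Fin n) ℝ} (hA : A.IsHermitian)
    (x : ℝ) : (x • (1 : Matrix (Fin n) (Fin n) ℝ) - A).det = ∏ i, (x - hA.eigenvalues i) := by
  have hU : (hA.eigenvectorUnitary : Matrix (Fin n) (Fin n) ℝ) *
      star (hA.eigenvectorUnitary : Matrix (Fin n) (Fin n) ℝ) = 1 :=
    Matrix.mem_unitaryGroup_iff.mp hA.eigenvectorUnitary.2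
  have key : x • (1 : Matrix (Fin n) (Fin n) ℝ) - A =
      (hA.eigenvectorUnitary : Matrix (Fin n) (Fin n) ℝ) *
        (x • 1 - Matrix.diagonal (RCLike.ofReal ∘ hA.eigenvalues)) *
        star (hA.eigenvectorUnitary : Matrix (Fin n) (Fin n) ℝ) := by
    rw [Matrix.mul_sub, Matrix.sub_mul]
    conv_lhs => rw [hA.spectral_theorem]
    simp only [Unitary.conjStarAlgAut_apply, Unitary.coe_star]
    congr 1
    rw [Matrix.mul_smul, Matrix.mul_one, Matrix.smul_mul, hU]
  rw [key, Matrix.det_mul_right_comm, hU, Matrix.one_mul,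
    Matrix.smul_one_eq_diagonal, Matrix.diagonal_sub, Matrix.det_diagonal]
  simp [RCLike.ofReal_real_eq_id]

/-- From `det(x•1+A) = det(x•1-A)` for all x, the eigenvalue multiset is symmetric. -/
lemma eig_multiset_symm {n : ℕ} {A : Matrix (Fin n) (Fin n) ℝ} (hA : A.IsHermitian)
    (hdet : ∀ x : ℝ, (x • (1 : Matrix (Fin n) (Fin n) ℝ) + A).det = (x • 1 - A).det)
    (hprod : ∀ x : ℝ, (x • (1 : Matrix (Fin n) (Fin n) ℝ) - A).det
      = ∏ i, (x - hA.eigenvalues i)) :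
    (Finset.univ.val.map hA.eigenvalues)
      = (Finset.univ.val.map hA.eigenvalues).map (fun r => -r) := by
  have hx : ∀ x : ℝ, ∏ i, (x - hA.eigenvalues i) = ∏ i, (x + hA.eigenvalues i) := by
    intro x
    have h1 : (x • (1 : Matrix (Fin n) (Fin n) ℝ) + A)
        = -(((-x) • (1 : Matrix (Fin n) (Fin n) ℝ)) - A) := by
      rw [neg_sub, neg_smul]; abel
    have h2 : ((x • (1 : Matrix (Fin n) (Fin n) ℝ)) + A).det
        = (-1 : ℝ)^n * ∏ i, (-x - hA.eigenvalues i) := by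
      rw [h1, Matrix.det_neg, hprod, Fintype.card_fin]
    have h3 : (-1 : ℝ)^n * ∏ i, (-x - hA.eigenvalues i) = ∏ i, (x + hA.eigenvalues i) := by
      rw [show ((-1 : ℝ)^n) = ∏ _i : Fin n, (-1 : ℝ) by simp, ← Finset.prod_mul_distrib]
      apply Finset.prod_congr rfl; intro i _; ring
    rw [← hprod x, ← hdet x, h2, h3]
  have hpq : (∏ i, (X - C (hA.eigenvalues i))) = ∏ i, (X - C (-(hA.eigenvalues i))) := by
    apply Polynomial.funext
    intro x
    simpa [eval_prod, sub_neg_eq_add] using hx x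
  have := congrArg Polynomial.roots hpq
  rwa [show (∏ i, (X - C (hA.eigenvalues i)))
        = ((Finset.univ.val.map hA.eigenvalues).map fun a => X - C a).prod by
      rw [Multiset.map_map]; rfl,
    show (∏ i, (X - C (-(hA.eigenvalues i))))
        = (((Finset.univ.val.map hA.eigenvalues).map (fun r => -r)).map fun a => X - C a).prod by
      rw [Multiset.map_map, Multiset.map_map]; rfl,
    Polynomial.roots_multiset_prod_X_sub_C, Polynomial.roots_multiset_prod_X_sub_C] at this

lemma card_subtype_eq_countP {n : ℕ} (f : Fin n → ℝ) (p : ℝ → Prop) [DecidablePred p] :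
    Fintype.card {i // p (f i)} = Multiset.countP p (Finset.univ.val.map f) := by
  classical
  rw [Fintype.card_subtype, Multiset.countP_map]
  rfl

lemma card_pos_eq_card_neg {n : ℕ} (f : Fin n → ℝ)
    (hm : (Finset.univ.val.map f) = (Finset.univ.val.map f).map (fun r => -r)) :
    Fintype.card {i // 0 < f i} = Fintype.card {i // f i < 0} := by
  classical
  rw [card_subtype_eq_countP f (fun r => 0 < r), card_subtype_eq_countP f (fun r => r < 0)]
  conv_lhs => rw [hm]
  rw [Multiset.countP_map, Multiset.countP_eq_card_filter]
  congr 1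
  apply Multiset.filter_congr
  intro x _
  simp [neg_pos]

lemma card_ne_split {n : ℕ} (f : Fin n → ℝ) :
    Fintype.card {i // f i ≠ 0}
      = Fintype.card {i // f i < 0} + Fintype.card {i // 0 < f i} := by
  classical
  have hunion : (Finset.univ.filter fun i => f i ≠ 0)
      = (Finset.univ.filter fun i => f i < 0) ∪ (Finset.univ.filter fun i => 0 < f i) := by
    ext i
    simp only [Finset.mem_union, Finset.mem_filter, Finset.mem_univ, true_and]
    exact ne_iff_lt_or_gt
  have hdisj : Disjoint (Finset.univ.filter fun i => f i < 0)
      (Finset.univ.filter fun i => 0 < f i) := by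
    rw [Finset.disjoint_left]
    intro i hi hj
    simp only [Finset.mem_filter, Finset.mem_univ, true_and] at hi hj
    exact absurd hj (not_lt.mpr hi.le)
  rw [Fintype.card_subtype, Fintype.card_subtype, Fintype.card_subtype, hunion,
    Finset.card_union_of_disjoint hdisj]

end InertiaAux

/-- the inertia of a weighted path on `n` vertices
(vertices `0, 1, …, n-1` in path order). -/
theorem stmt17 (n : ℕ) (hn : 1 ≤ n) (W : WeightedGraph (Fin n))
    (hadj : ∀ a b : Fin n, W.G.Adj a b ↔ (b.1 = a.1 + 1 ∨ a.1 = b.1 + 1)) :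
    (Odd n → W.iPos = (n - 1) / 2 ∧ W.iNeg = (n - 1) / 2) ∧
    (Even n → W.iPos = n / 2 ∧ W.iNeg = n / 2) := by
  set A := W.adjMatrix with hAdef
  have hA : A.IsHermitian := by
    ext i j
    simp only [conjTranspose_apply, star, hAdef, WeightedGraph.adjMatrix]
    by_cases h : W.G.Adj j i
    · rw [if_pos h, if_pos h.symm, W.symm]
    · rw [if_neg h, if_neg fun h' => h h'.symm]
  -- entries
  have hAent : ∀ i j : Fin n, W.G.Adj i j → A i j = W.w i j := by
    intro i j h; simp [hAdef, WeightedGraph.adjMatrix, h]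
  have hAzero : ∀ i j : Fin n, ¬ W.G.Adj i j → A i j = 0 := by
    intro i j h; simp [hAdef, WeightedGraph.adjMatrix, h]
  -- sign conjugation
  have hdet : ∀ x : ℝ, (x • (1 : Matrix (Fin n) (Fin n) ℝ) + A).det = (x • 1 - A).det := by
    intro x
    set D : Matrix (Fin n) (Fin n) ℝ := Matrix.diagonal (fun i : Fin n => (-1 : ℝ)^(i : ℕ))
      with hD
    have hDD : D * D = 1 := by
      rw [hD, Matrix.diagonal_mul_diagonal]
      convert Matrix.diagonal_one
      rw [← pow_add]
      simp [← two_mul, pow_mul]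
    have hDAD : D * A * D = -A := by
      ext i j
      rw [Matrix.mul_diagonal, Matrix.diagonal_mul]
      by_cases h : W.G.Adj i j
      · rw [hAent i j h]
        have := (hadj i j).mp h
        have hs : (-1 : ℝ)^(i:ℕ) * ((-1:ℝ)^(j:ℕ)) = -1 := by
          rcases this with h' | h'
          · rw [h', ← pow_add]
            have he : (i:ℕ) + ((i:ℕ)+1) = 2*(i:ℕ)+1 := by omega
            rw [he, pow_succ, pow_mul]; norm_num
          · rw [h', ← pow_add]
            have he : ((j:ℕ)+1) + (j:ℕ) = 2*(j:ℕ)+1 := by omega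
            rw [he, pow_succ, pow_mul]; norm_num
        have : (-1 : ℝ)^(i:ℕ) * W.w i j * (-1:ℝ)^(j:ℕ) = -W.w i j := by
          rw [mul_right_comm, hs]; ring
        rw [this]; simp [hAent i j h]
      · rw [hAzero i j h]; simp [hAzero i j h]
    have h2 : x • (1 : Matrix (Fin n) (Fin n) ℝ) - A = D * (x • 1 + A) * D := by
      rw [Matrix.mul_add, Matrix.add_mul, hDAD]
      rw [Matrix.mul_smul, Matrix.mul_one, Matrix.smul_mul, hDD, sub_eq_add_neg]
    have hd2 : D.det * D.det = 1 := by rw [← Matrix.det_mul, hDD, Matrix.det_one]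
    rw [h2, Matrix.det_mul, Matrix.det_mul, mul_right_comm, hd2, one_mul]
  -- kernel is at most 1-dimensional
  have hker : ∀ v : Fin n → ℝ, A.mulVec v = 0 → v ⟨0, hn⟩ = 0 → v = 0 := by
    intro v hv h0
    have row : ∀ i : Fin n, ∑ j, A i j * v j = 0 := by
      intro i
      have := congrFun hv i
      simpa [Matrix.mulVec, dotProduct] using this
    have main : ∀ k : ℕ, ∀ hk : k < n, v ⟨k, hk⟩ = 0 := by
      intro k
      induction k using Nat.strong_induction_on with
      | _ k ih =>
        intro hk
        match k, hk with
        | 0, hk => exact h0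
        | 1, hk =>
          have h01 : W.G.Adj ⟨0, hn⟩ ⟨1, hk⟩ := by rw [hadj]; left; rfl
          have hs : ∑ j, A ⟨0, hn⟩ j * v j = A ⟨0, hn⟩ ⟨1, hk⟩ * v ⟨1, hk⟩ := by
            apply Finset.sum_eq_single_of_mem (f := fun j => A ⟨0, hn⟩ j * v j) ⟨1, hk⟩ (Finset.mem_univ _)
            intro b _ hb
            have hnb : ¬ W.G.Adj ⟨0, hn⟩ b := by
              rw [hadj]
              push_neg
              have hb1 : b.1 ≠ 1 := fun h => hb (Fin.ext h)
              constructor <;> simp only [Fin.val_mk] <;> omega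
            rw [hAzero _ _ hnb, zero_mul]
          have h1 := row ⟨0, hn⟩
          rw [hs, hAent _ _ h01] at h1
          exact (mul_eq_zero.mp h1).resolve_left (ne_of_gt (W.pos _ _ h01))
        | (k+2), hk =>
          have hklt : k < n := by omega
          have hk1 : k + 1 < n := by omega
          have hadj2 : W.G.Adj ⟨k+1, hk1⟩ ⟨k+2, hk⟩ := by rw [hadj]; left; rfl
          have hs : ∑ j, A ⟨k+1, hk1⟩ j * v j
              = A ⟨k+1, hk1⟩ ⟨k, hklt⟩ * v ⟨k, hklt⟩
                + A ⟨k+1, hk1⟩ ⟨k+2, hk⟩ * v ⟨k+2, hk⟩ := by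
            apply Finset.sum_eq_add_of_mem (f := fun j => A ⟨k+1, hk1⟩ j * v j)
              ⟨k, hklt⟩ ⟨k+2, hk⟩ (Finset.mem_univ _)
              (Finset.mem_univ _) (Fin.ne_of_val_ne (by simp only [Fin.val_mk]; omega))
            intro c _ hc
            have hc1 : c.1 ≠ k := fun h => hc.1 (Fin.ext h)
            have hc2 : c.1 ≠ k + 2 := fun h => hc.2 (Fin.ext h)
            have hnc : ¬ W.G.Adj ⟨k+1, hk1⟩ c := by
              rw [hadj]
              push_neg
              constructor <;> simp only [Fin.val_mk] <;> omega
            rw [hAzero _ _ hnc, zero_mul]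
          have h1 := row ⟨k+1, hk1⟩
          rw [hs, ih k (by omega) hklt, mul_zero, zero_add, hAent _ _ hadj2] at h1
          exact (mul_eq_zero.mp h1).resolve_left (ne_of_gt (W.pos _ _ hadj2))
    funext i
    have := main i.1 i.2
    simpa using this
  have hrank1 : A.rank + Module.finrank ℝ (LinearMap.ker A.mulVecLin) = n := by
    have h := LinearMap.finrank_range_add_finrank_ker A.mulVecLin
    rw [Module.finrank_fin_fun] at h
    exact h
  have hker1 : Module.finrank ℝ (LinearMap.ker A.mulVecLin) ≤ 1 := by
    have hinj : Function.Injective ((LinearMap.proj (⟨0, hn⟩ : Fin n)).comp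
        (LinearMap.ker A.mulVecLin).subtype) := by
      rw [← LinearMap.ker_eq_bot, Submodule.eq_bot_iff]
      intro x hx
      have hx0 : x.1 ⟨0, hn⟩ = 0 := hx
      have hxk : A.mulVec x.1 = 0 := x.2
      exact Subtype.ext (hker x.1 hxk hx0)
    calc Module.finrank ℝ (LinearMap.ker A.mulVecLin)
        ≤ Module.finrank ℝ ℝ := LinearMap.finrank_le_finrank_of_injective hinj
      _ = 1 := Module.finrank_self ℝ
  have hranklb : n - 1 ≤ A.rank := by omega
  have hm := eig_multiset_symm hA hdet (fun x => det_smul_one_sub_eq_prod hA x)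
  have hPN := card_pos_eq_card_neg hA.eigenvalues hm
  have hrank2 : A.rank = Fintype.card {i // hA.eigenvalues i < 0}
      + Fintype.card {i // 0 < hA.eigenvalues i} := by
    rw [hA.rank_eq_card_non_zero_eigs, card_ne_split]
  have hiPos : W.iPos = Fintype.card {i // 0 < hA.eigenvalues i} := by
    unfold WeightedGraph.iPos posInertia
    rw [← hAdef, dif_pos hA]
  have hiNeg : W.iNeg = Fintype.card {i // hA.eigenvalues i < 0} := by
    unfold WeightedGraph.iNeg negInertia
    rw [← hAdef, dif_pos hA]
  rw [hiPos, hiNeg, ← hPN]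
  constructor
  · rintro ⟨t, ht⟩
    omega
  · rintro ⟨t, ht⟩
    omega
end
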